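/- Let n, k, λ, μ be nonnegative integers such that 0 < k < n − 1, such that (n − 1 − k)·μ = k·(k − 1 − λ), and such that the two real numbers (1/2)·(n − 1 ± ((n−1)(λ−μ) + 2k)/√((λ−μ)² + 4(k−μ))) are nonnegative integers (in particular (λ−μ)² + 4(k−μ) > 0). Then every prime p divides the integer c_p, where the integer sequence (c_ℓ) is defined by c₀ = n, c₁ = 0, and c_ℓ = μ·n·k^{ℓ−2} + (λ−μ)·c_{ℓ−1} + (k−μ)·c_{ℓ−2} for ℓ ≥ 2. -/

import Mathlib

open Matrix

/-- Lucas-type sequence `d 0 = 2`, `d 1 = A`, `d (n+2) = A d(n+1) + B d n`. -/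
def lucasSeq (A B : ℤ) : ℕ → ℤ
  | 0 => 2
  | 1 => A
  | (n+2) => A * lucasSeq A B (n+1) + B * lucasSeq A B n

lemma seq_ext {c v : ℕ → ℤ} {F : ℕ → ℤ → ℤ → ℤ}
    (h0 : c 0 = v 0) (h1 : c 1 = v 1)
    (hc : ∀ ℓ, c (ℓ+2) = F ℓ (c ℓ) (c (ℓ+1)))
    (hv : ∀ ℓ, v (ℓ+2) = F ℓ (v ℓ) (v (ℓ+1))) : ∀ ℓ, c ℓ = v ℓ := by
  have key : ∀ ℓ, c ℓ = v ℓ ∧ c (ℓ+1) = v (ℓ+1) := by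
    intro ℓ
    induction ℓ with
    | zero => exact ⟨h0, h1⟩
    | succ m ih => exact ⟨ih.2, by rw [hc m, hv m, ih.1, ih.2]⟩
  exact fun ℓ => (key ℓ).1

lemma lucas_dvd (A B : ℤ) {p : ℕ} (hp : p.Prime) : (p:ℤ) ∣ lucasSeq A B p - A := by
  haveI := Fact.mk hp
  rw [← ZMod.intCast_zmod_eq_zero_iff_dvd]
  push_cast
  let M : Matrix (Fin 2) (Fin 2) (ZMod p) := !![(A:ZMod p), (B:ZMod p); 1, 0]
  have htr : trace M = (A:ZMod p) := by simp [M, Matrix.trace_fin_two]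
  have hM2 : M^2 = (A:ZMod p) • M + (B:ZMod p) • (1 : Matrix (Fin 2) (Fin 2) (ZMod p)) := by
    ext i j
    fin_cases i <;> fin_cases j <;>
      simp [M, pow_two, Matrix.mul_apply, Fin.sum_univ_two, Matrix.one_apply]
  have key : ∀ ℓ, ((lucasSeq A B ℓ : ℤ) : ZMod p) = trace (M^ℓ) ∧
      ((lucasSeq A B (ℓ+1) : ℤ) : ZMod p) = trace (M^(ℓ+1)) := by
    intro ℓ
    induction ℓ with
    | zero =>
      constructor
      · simp [lucasSeq, Matrix.trace_one]
      · simp [lucasSeq, htr]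
    | succ m ih =>
      refine ⟨ih.2, ?_⟩
      have hstep : M^(m+2) = (A:ZMod p) • M^(m+1) + (B:ZMod p) • M^m := by
        have : M^(m+2) = M^m * M^2 := pow_add M m 2
        rw [this, hM2, mul_add, mul_smul_comm, mul_smul_comm, mul_one, ← pow_succ]
      have hl : lucasSeq A B (m+2) = A * lucasSeq A B (m+1) + B * lucasSeq A B m := rfl
      rw [hl]
      push_cast
      rw [ih.1, ih.2, hstep, trace_add, trace_smul, trace_smul, smul_eq_mul, smul_eq_mul]
  have hfin : ((lucasSeq A B p : ℤ) : ZMod p) = (A : ZMod p) := by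
    rw [(key p).1, ZMod.trace_pow_card, htr, ZMod.pow_card]
  rw [hfin]
  ring

/-- Let `n, k, l, μ` be nonnegative integers with `0 < k < n − 1`,
`(n − 1 − k)·μ = k·(k − 1 − l)`, and such that the two real numbers
`(1/2)·(n − 1 ∓ ((n−1)(l−μ) + 2k)/√((l−μ)² + 4(k−μ)))` are nonnegative integers
(in particular the discriminant is positive). Then every prime `p` divides `c p`,
where `c 0 = n`, `c 1 = 0`, and
`c ℓ = μ·n·k^(ℓ−2) + (l−μ)·c (ℓ−1) + (k−μ)·c (ℓ−2)` for `ℓ ≥ 2`. -/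
theorem walk_condition_subsumed (n k l μ : ℕ)
    (hk : 0 < k) (hkn : (k : ℤ) < (n : ℤ) - 1)
    (hparam : ((n : ℤ) - 1 - k) * μ = (k : ℤ) * ((k : ℤ) - 1 - l))
    (hdisc : 0 < ((l : ℝ) - μ) ^ 2 + 4 * ((k : ℝ) - μ))
    (hm1 : ∃ m : ℕ, (m : ℝ) =
      (1 / 2) * ((n : ℝ) - 1 -
        (((n : ℝ) - 1) * ((l : ℝ) - μ) + 2 * k) /
          Real.sqrt (((l : ℝ) - μ) ^ 2 + 4 * ((k : ℝ) - μ))))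
    (hm2 : ∃ m : ℕ, (m : ℝ) =
      (1 / 2) * ((n : ℝ) - 1 +
        (((n : ℝ) - 1) * ((l : ℝ) - μ) + 2 * k) /
          Real.sqrt (((l : ℝ) - μ) ^ 2 + 4 * ((k : ℝ) - μ))))
    (c : ℕ → ℤ) (hc0 : c 0 = n) (hc1 : c 1 = 0)
    (hrec : ∀ ℓ : ℕ, c (ℓ + 2) =
      (μ : ℤ) * n * (k : ℤ) ^ ℓ + ((l : ℤ) - μ) * c (ℓ + 1) + ((k : ℤ) - μ) * c ℓ)
    (p : ℕ) (hp : p.Prime) :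
    (p : ℤ) ∣ c p := by
  haveI := Fact.mk hp
  obtain ⟨m1, e1⟩ := hm1
  obtain ⟨m2, e2⟩ := hm2
  set A : ℤ := (l : ℤ) - (μ : ℤ) with hA
  set B : ℤ := (k : ℤ) - (μ : ℤ) with hB
  set NZ : ℤ := ((n:ℤ)-1) * A + 2*k with hNZ
  set S : ℝ := Real.sqrt (((l : ℝ) - μ) ^ 2 + 4 * ((k : ℝ) - μ)) with hSdef
  have hS : 0 < S := Real.sqrt_pos.mpr hdisc
  have hS2 : S^2 = ((l : ℝ) - μ) ^ 2 + 4 * ((k : ℝ) - μ) := Real.sq_sqrt hdisc.le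
  have hNR : (((n : ℝ) - 1) * ((l : ℝ) - μ) + 2 * k) = (NZ : ℝ) := by
    rw [hNZ, hA]; push_cast; ring
  rw [hNR] at e1 e2
  have he1 : 2 * (m1:ℝ) * S = ((n:ℝ)-1) * S - NZ := by
    rw [e1]; field_simp
  have he2 : 2 * (m2:ℝ) * S = ((n:ℝ)-1) * S + NZ := by
    rw [e2]; field_simp
  have hsumR : ((m1:ℝ) + m2) * (2*S) = ((n:ℝ)-1) * (2*S) := by linear_combination he1 + he2
  have hsumR' : (m1:ℝ) + m2 = (n:ℝ) - 1 :=
    mul_right_cancel₀ (by positivity) hsumR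
  have hsumZ : (m1:ℤ) + m2 = (n:ℤ) - 1 := by exact_mod_cast hsumR'
  have hdiffR : ((m2:ℝ) - m1) * S = NZ := by linear_combination (he2 - he1) / 2
  have hk2 : (k:ℤ)^2 = (μ:ℤ)*n + A*k + B := by rw [hA, hB]; linear_combination -hparam
  -- reduce to ZMod p
  rw [← ZMod.intCast_zmod_eq_zero_iff_dvd]
  by_cases hmm : m1 = m2
  · -- conference case
    subst hmm
    have hN0 : NZ = 0 := by
      have h0 : (NZ:ℝ) = 0 := by rw [← hdiffR]; ring
      exact_mod_cast h0
    have h2m : 2*(m1:ℤ) = (n:ℤ) - 1 := by linarith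
    have hkA : (k:ℤ) + m1 * A = 0 := by
      have h2 : 2*((k:ℤ) + m1*A) = 0 := by linear_combination hN0 + A * h2m
      linarith
    have hform : ∀ ℓ, c ℓ = (k:ℤ)^ℓ + m1 * lucasSeq A B ℓ := by
      refine seq_ext (F := fun ℓ x y => (μ : ℤ) * n * (k : ℤ) ^ ℓ + A * y + B * x) ?_ ?_ hrec ?_
      · rw [hc0]; show (n:ℤ) = (k:ℤ)^0 + m1 * 2; linarith
      · rw [hc1]; show (0:ℤ) = (k:ℤ)^1 + m1 * A; linarith [hkA]
      · intro ℓ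
        show (k:ℤ)^(ℓ+2) + m1 * (A * lucasSeq A B (ℓ+1) + B * lucasSeq A B ℓ) = _
        linear_combination ((k:ℤ)^ℓ) * hk2
    rw [hform p]
    have hd : ((lucasSeq A B p : ℤ) : ZMod p) = ((A:ℤ) : ZMod p) := by
      have h := (ZMod.intCast_zmod_eq_zero_iff_dvd _ p).mpr (lucas_dvd A B hp)
      rw [Int.cast_sub, sub_eq_zero] at h
      exact h
    push_cast
    rw [ZMod.pow_card, hd]
    have hcast := congrArg (Int.cast : ℤ → ZMod p) hkA
    push_cast at hcast
    linear_combination hcast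
  · -- integral eigenvalue case
    have hdZ : ((m2:ℤ) - m1) ≠ 0 := by
      intro h
      have h' : m2 = m1 := by exact_mod_cast sub_eq_zero.mp h
      exact hmm h'.symm
    have hdR : ((m2:ℝ) - m1) ≠ 0 := by
      intro h
      have h' : m2 = m1 := by exact_mod_cast sub_eq_zero.mp h
      exact hmm h'.symm
    have hsqR : ((m2:ℝ)-m1)^2 * (((l : ℝ) - μ) ^ 2 + 4 * ((k : ℝ) - μ)) = (NZ:ℝ)^2 := by
      rw [← hS2]; linear_combination (((m2:ℝ)-m1)*S + NZ) * hdiffR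
    have hsqZ : ((m2:ℤ)-m1)^2 * (A^2 + 4*B) = NZ^2 := by
      have : (((((m2:ℤ)-m1)^2 * (A^2 + 4*B)) : ℤ) : ℝ) = ((NZ^2 : ℤ) : ℝ) := by
        push_cast [hA, hB]
        push_cast at hsqR
        linear_combination hsqR
      exact_mod_cast this
    have hdvd : ((m2:ℤ)-m1) ∣ NZ := by
      rw [← Int.pow_dvd_pow_iff (two_ne_zero)]
      exact ⟨A^2+4*B, hsqZ.symm⟩
    obtain ⟨t, ht⟩ := hdvd
    have htS : (t:ℝ) = S := by
      have h : ((m2:ℝ)-m1) * t = ((m2:ℝ)-m1) * S := by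
        rw [hdiffR, ht]; push_cast; ring
      exact mul_left_cancel₀ hdR h
    have ht2 : t^2 = A^2 + 4*B := by
      have h : ((m2:ℤ)-m1)^2 * t^2 = ((m2:ℤ)-m1)^2 * (A^2+4*B) := by
        rw [hsqZ, ht]; ring
      exact mul_left_cancel₀ (pow_ne_zero 2 hdZ) h
    have hpar : ∃ r : ℤ, 2*r = A + t := by
      rcases Int.even_or_odd A with ⟨a, ha⟩ | ⟨a, ha⟩ <;>
        rcases Int.even_or_odd t with ⟨b, hb⟩ | ⟨b, hb⟩
      · exact ⟨a + b, by omega⟩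
      · exfalso
        have : 4*b^2 + 4*b + 1 = 4*a^2 + 4*B := by rw [ha, hb] at ht2; linarith [ht2]
        omega
      · exfalso
        have : 4*b^2 = 4*a^2 + 4*a + 1 + 4*B := by rw [ha, hb] at ht2; linarith [ht2]
        omega
      · exact ⟨a + b + 1, by omega⟩
    obtain ⟨r, hr⟩ := hpar
    set s : ℤ := A - r with hs
    have hr2 : r^2 = A*r + B := by
      have h4 : 4*(r^2 - A*r - B) = 0 := by linear_combination (2*r - A + t) * hr + ht2
      linarith
    have hs2' : s^2 = A*s + B := by rw [hs]; linear_combination hr2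
    have h1 : (k:ℤ) + m1*r + m2*s = 0 := by
      have h2 : 2*((k:ℤ) + m1*r + m2*s) = 0 := by
        rw [hs]
        linear_combination ((m1:ℤ) - m2) * hr + A * hsumZ + ht - hNZ
      linarith
    have hform : ∀ ℓ, c ℓ = (k:ℤ)^ℓ + m1 * r^ℓ + m2 * s^ℓ := by
      refine seq_ext (F := fun ℓ x y => (μ : ℤ) * n * (k : ℤ) ^ ℓ + A * y + B * x) ?_ ?_ hrec ?_
      · rw [hc0]; show (n:ℤ) = (k:ℤ)^0 + m1 * r^0 + m2 * s^0
        simp; linarith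
      · rw [hc1]; show (0:ℤ) = (k:ℤ)^1 + m1 * r^1 + m2 * s^1
        simp; linarith [h1]
      · intro ℓ
        show (k:ℤ)^(ℓ+2) + m1 * r^(ℓ+2) + m2 * s^(ℓ+2) = _
        linear_combination ((k:ℤ)^ℓ) * hk2 + ((m1:ℤ) * r^ℓ) * hr2 + ((m2:ℤ) * s^ℓ) * hs2'
    rw [hform p]
    push_cast
    rw [ZMod.pow_card, ZMod.pow_card, ZMod.pow_card]
    have hcast := congrArg (Int.cast : ℤ → ZMod p) h1
    push_cast at hcast
    linear_combination hcast
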